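/- Let f = F(X)·Y and g = H(X) be polynomials in K[X,Y] with F, H ∈ K[X], satisfying {f,g} = 1. Then F is a nonzero constant α, and g = -α^{-1}X + r for some r ∈ K. -/

import Mathlib

open MvPolynomial

/-- The Poisson product on `K[X,Y]`: `{f,g} = f_X g_Y - f_Y g_X`. -/
noncomputable def poissonBracket {K : Type*} [CommRing K]
    (f g : MvPolynomial (Fin 2) K) : MvPolynomial (Fin 2) K :=
  pderiv 0 f * pderiv 1 g - pderiv 1 f * pderiv 0 g

lemma pderiv_aeval_X0 {K : Type*} [CommRing K] (P : Polynomial K) :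
    pderiv (1 : Fin 2) (Polynomial.aeval (X 0 : MvPolynomial (Fin 2) K) P) = 0 ∧
    pderiv (0 : Fin 2) (Polynomial.aeval (X 0 : MvPolynomial (Fin 2) K) P)
      = Polynomial.aeval (X 0 : MvPolynomial (Fin 2) K) P.derivative := by
  induction P using Polynomial.induction_on with
  | C a => simp
  | add p q hp hq => simp [hp.1, hp.2, hq.1, hq.2, mul_add]
  | monomial n a h =>
      simp only [map_mul, Polynomial.aeval_C, map_pow, Polynomial.aeval_X,
        Polynomial.derivative_mul, Polynomial.derivative_C, Polynomial.derivative_X_pow] at *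
      constructor
      · simp [pderiv_X, h.1]
      · rw [Derivation.leibniz, pderiv_pow, pderiv_X_self]; simp [Algebra.smul_def, Algebra.algebraMap_self_apply]
      
lemma psi_phi {K : Type*} [CommRing K] (P : Polynomial K) :
    (aeval (fun i : Fin 2 => if i = 0 then Polynomial.X else 0))
      ((Polynomial.aeval (X 0 : MvPolynomial (Fin 2) K)) P) = P := by
  induction P using Polynomial.induction_on with
  | C a => simp
  | add p q hp hq => simp [hp, hq]
  | monomial n a h => simp


/-- If `f = F(X)·Y`, `g = H(X)` with `{f,g} = 1`, then `F` is a nonzero constant `α`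
and `H = -α⁻¹ X + r` for some `r ∈ K`. -/
theorem bracket_one_FY_HX {K : Type*} [Field K] [CharZero K]
    (F H : Polynomial K)
    (hbr : poissonBracket (Polynomial.aeval (X 0 : MvPolynomial (Fin 2) K) F * X 1)
        (Polynomial.aeval (X 0 : MvPolynomial (Fin 2) K) H) = 1) :
    ∃ α : K, α ≠ 0 ∧ F = Polynomial.C α ∧
      ∃ r : K, H = Polynomial.C (-α⁻¹) * Polynomial.X + Polynomial.C r := by
  unfold poissonBracket at hbr
  rw [pderiv_mul, pderiv_mul, (pderiv_aeval_X0 F).1, (pderiv_aeval_X0 F).2,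
    (pderiv_aeval_X0 H).1, (pderiv_aeval_X0 H).2, pderiv_X_self] at hbr
  simp only [pderiv_X, Fin.isValue, mul_zero, zero_mul, mul_one, zero_add,
    Pi.single_eq_of_ne (by decide : (1:Fin 2) ≠ 0), zero_sub, add_zero] at hbr
  -- hbr : -(aeval .. F * aeval .. H.derivative) = 1  (roughly)
  have key : F * H.derivative = -1 := by
    have := congrArg (aeval (R := K) (fun i : Fin 2 => if i = 0 then Polynomial.X else (0 : Polynomial K))) hbr
    simp only [map_neg, map_mul, map_one, psi_phi] at this
    linear_combination -this
  have hFunit : IsUnit F := IsUnit.of_mul_eq_one (-H.derivative) (by linear_combination -key)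
  obtain ⟨α, hα, hFC⟩ := Polynomial.isUnit_iff.mp hFunit
  have hα0 : α ≠ 0 := hα.ne_zero
  refine ⟨α, hα0, hFC.symm, H.coeff 0, ?_⟩
  have hder : H.derivative = Polynomial.C (-α⁻¹) := by
    rw [← hFC] at key
    have : Polynomial.C α * H.derivative = Polynomial.C α * Polynomial.C (-α⁻¹) := by
      rw [key, ← Polynomial.C_mul]; simp [hα0]
    exact mul_left_cancel₀ (by simpa using hα0) this
  have h2 : (H - Polynomial.C (-α⁻¹) * Polynomial.X).derivative = 0 := by
    simp [hder]
  have := Polynomial.eq_C_of_derivative_eq_zero h2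
  have hc : (H - Polynomial.C (-α⁻¹) * Polynomial.X).coeff 0 = H.coeff 0 := by
    simp [Polynomial.coeff_sub]
  rw [hc] at this
  linear_combination this
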